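/- Let ρ₁: G₁ → GL(V₁), ρ₂: G₂ → GL(V₂) be SV-representations (irreducible with dim Vᵢ² = |Gᵢ/Z(Gᵢ)|) with central characters ψ₁, ψ₂, and α: G₁ → G₂ an isomorphism. Then an isomorphism T: V₁ → V₂ with T ∘ ρ₁(g) = ρ₂(α(g)) ∘ T for all g ∈ G₁ exists if and only if ψ₁ = ψ₂ ∘ α on Z(G₁). -/

import Mathlib

set_option linter.unusedSectionVars false

open Module LinearMap Polynomial



private lemma aux_trace_inv {V : Type*} [AddCommGroup V] [Module ℂ V] [FiniteDimensional ℂ V]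
    (f f' : Module.End ℂ V) (hff' : f * f' = 1) (hf'f : f' * f = 1)
    {n : ℕ} (hn : 0 < n) (hfn : f ^ n = 1) :
    LinearMap.trace ℂ V f' = starRingEnd ℂ (LinearMap.trace ℂ V f) := by
  classical
  have hss : f.IsSemisimple := by
    apply Module.End.isSemisimple_of_squarefree_aeval_eq_zero
      (p := (X : ℂ[X]) ^ n - C 1)
    · exact (Polynomial.separable_X_pow_sub_C (1 : ℂ)
        (by exact_mod_cast hn.ne') one_ne_zero).squarefree
    · simp [map_pow, hfn]
  have hsup : ⨆ μ : ℂ, f.eigenspace μ = ⊤ := by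
    have h1 := Module.End.iSup_maxGenEigenspace_eq_top f
    have h2 : ∀ μ : ℂ, f.maxGenEigenspace μ = f.eigenspace μ := fun μ =>
      hss.isFinitelySemisimple.maxGenEigenspace_eq_eigenspace μ
    simpa only [h2] using h1
  have hint : DirectSum.IsInternal (fun μ : ℂ => f.eigenspace μ) :=
    (DirectSum.isInternal_submodule_iff_iSupIndep_and_iSup_eq_top _).mpr
      ⟨f.eigenspaces_iSupIndep, hsup⟩
  have hroot : ∀ μ : ℂ, f.eigenspace μ ≠ ⊥ → μ ^ n = 1 := by
    intro μ hμ
    obtain ⟨v, hv, hv0⟩ := (Submodule.ne_bot_iff _).mp hμ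
    have hev : f.HasEigenvector μ v := ⟨hv, hv0⟩
    have h := hev.pow_apply n
    rw [hfn] at h
    have h1 : (μ ^ n - 1) • v = 0 := by
      rw [sub_smul, one_smul, ← h]
      simp
    rcases smul_eq_zero.mp h1 with h2 | h2
    · linear_combination h2
    · exact absurd h2 hv0
  have hfin : {μ : ℂ | f.eigenspace μ ≠ ⊥}.Finite := by
    apply Set.Finite.subset (Polynomial.finite_setOf_isRoot
      (p := (X : ℂ[X]) ^ n - C 1) (Polynomial.X_pow_sub_C_ne_zero hn 1))
    intro μ hμ
    simp only [Set.mem_setOf_eq, IsRoot.def, eval_sub, eval_pow, eval_X, eval_one, eval_C]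
    rw [hroot μ hμ, sub_self]
  have hmf : ∀ μ : ℂ, Set.MapsTo f (f.eigenspace μ) (f.eigenspace μ) := fun μ =>
    Module.End.mapsTo_genEigenspace_of_comm (Commute.refl f) μ 1
  have hcomm : Commute f f' := by
    show f * f' = f' * f
    rw [hff', hf'f]
  have hmf' : ∀ μ : ℂ, Set.MapsTo f' (f.eigenspace μ) (f.eigenspace μ) := fun μ =>
    Module.End.mapsTo_genEigenspace_of_comm hcomm μ 1
  have key := LinearMap.trace_eq_sum_trace_restrict' hint hfin hmf
  have key' := LinearMap.trace_eq_sum_trace_restrict' hint hfin hmf'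
  rw [key, key', map_sum]
  apply Finset.sum_congr rfl
  intro μ hμ
  have hμb : f.eigenspace μ ≠ ⊥ := by simpa using hμ
  have hμn : μ ^ n = 1 := hroot μ hμb
  have hμ0 : μ ≠ 0 := by
    intro h; rw [h] at hμn; simp [zero_pow hn.ne'] at hμn
  have hconj : starRingEnd ℂ μ = μ⁻¹ := by
    rw [← Complex.inv_eq_conj (Complex.norm_eq_one_of_pow_eq_one hμn hn.ne')]
  have hres : f.restrict (hmf μ) = μ • (1 : Module.End ℂ (f.eigenspace μ)) := by
    ext v
    have hv := Module.End.mem_eigenspace_iff.mp v.2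
    simp only [LinearMap.smul_apply, Module.End.one_apply, Submodule.coe_smul]
    exact hv
  have hres' : f'.restrict (hmf' μ) = μ⁻¹ • (1 : Module.End ℂ (f.eigenspace μ)) := by
    ext v
    have hv := Module.End.mem_eigenspace_iff.mp v.2
    have h2 : f' (f v.1) = v.1 := by
      rw [← Module.End.mul_apply, hf'f]; rfl
    rw [hv, map_smul] at h2
    have h3 : f' v.1 = μ⁻¹ • v.1 := ((inv_smul_eq_iff₀ hμ0).mpr h2.symm).symm
    simp only [LinearMap.smul_apply, Module.End.one_apply, Submodule.coe_smul]
    exact h3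
  rw [hres, hres', map_smul, map_smul, LinearMap.trace_one,
    smul_eq_mul, smul_eq_mul, map_mul, hconj, Complex.conj_natCast]



private lemma aux_scalar {G V : Type*} [Group G] [AddCommGroup V] [Module ℂ V]
    [FiniteDimensional ℂ V] [Nontrivial V] (ρ : Representation ℂ G V)
    (hirr : ∀ U : Submodule ℂ V, (∀ g : G, ∀ v ∈ U, ρ g v ∈ U) → U = ⊥ ∨ U = ⊤)
    (T : Module.End ℂ V) (hT : ∀ g : G, ρ g * T = T * ρ g) :
    ∃ c : ℂ, T = c • (1 : Module.End ℂ V) := by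
  obtain ⟨μ, hμ⟩ := Module.End.exists_eigenvalue T
  refine ⟨μ, ?_⟩
  have hU : ∀ g : G, ∀ v ∈ T.eigenspace μ, ρ g v ∈ T.eigenspace μ := by
    intro g v hv
    rw [Module.End.mem_eigenspace_iff] at hv ⊢
    have h := congrArg (fun S : Module.End ℂ V => S v) (hT g)
    simp only [Module.End.mul_apply] at h
    rw [← h, hv, map_smul]
  rcases hirr _ hU with hbot | htop
  · exact absurd hbot hμ
  · ext v
    have hv : v ∈ T.eigenspace μ := htop ▸ Submodule.mem_top
    simpa using Module.End.mem_eigenspace_iff.mp hv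

private lemma aux_avg {G V : Type*} [Group G] [Fintype G] [AddCommGroup V] [Module ℂ V]
    [FiniteDimensional ℂ V] (ρ : Representation ℂ G V) :
    ∑ g : G, LinearMap.trace ℂ V (ρ g)
      = (Fintype.card G : ℂ) * (finrank ℂ ρ.invariants : ℂ) := by
  letI : Invertible (Fintype.card G : ℂ) :=
    invertibleOfNonzero (Nat.cast_ne_zero.mpr Fintype.card_ne_zero)
  have h := (Representation.isProj_averageMap ρ).trace
  have h2 : LinearMap.trace ℂ V (Representation.averageMap ρ)
      = ⅟ (Fintype.card G : ℂ) • ∑ g : G, LinearMap.trace ℂ V (ρ g) := by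
    simp only [Representation.averageMap, GroupAlgebra.average, map_smul, map_sum]
    congr 1
    apply Finset.sum_congr rfl
    intro g _
    have := ρ.asAlgebraHom_single g (1 : ℂ)
    rw [MonoidAlgebra.of_apply, this, one_smul]
  rw [h2, smul_eq_mul] at h
  rw [← h, ← mul_assoc, mul_invOf_self, one_mul]

private lemma aux_one_ne_zero {V : Type*} [AddCommGroup V] [Module ℂ V] [Nontrivial V] :
    (1 : Module.End ℂ V) ≠ 0 := by
  obtain ⟨v, hv⟩ := exists_ne (0 : V)
  intro h
  have := congrArg (fun S : Module.End ℂ V => S v) h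
  simp at this
  exact hv this

private lemma aux_dim_one {G V : Type*} [Group G] [AddCommGroup V] [Module ℂ V]
    [FiniteDimensional ℂ V] [Nontrivial V] (ρ : Representation ℂ G V)
    (hirr : ∀ U : Submodule ℂ V, (∀ g : G, ∀ v ∈ U, ρ g v ∈ U) → U = ⊥ ∨ U = ⊤) :
    finrank ℂ (Representation.linHom ρ ρ).invariants = 1 := by
  have hspan : (Representation.linHom ρ ρ).invariants
      = Submodule.span ℂ {(1 : Module.End ℂ V)} := by
    apply le_antisymm
    · intro f hf
      rw [Representation.mem_invariants] at hf
      have hcomm : ∀ g : G, ρ g * f = f * ρ g := by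
        intro g
        have h := hf g
        rw [Representation.linHom_apply] at h
        have h2 := congrArg (fun S : Module.End ℂ V => S ∘ₗ ρ g) h
        simp only [LinearMap.comp_assoc] at h2
        have h3 : ρ g⁻¹ ∘ₗ ρ g = LinearMap.id := by
          rw [← Module.End.mul_eq_comp, ← map_mul, inv_mul_cancel, map_one]; rfl
        rw [h3, LinearMap.comp_id] at h2
        rw [← Module.End.mul_eq_comp, ← Module.End.mul_eq_comp] at h2
        exact h2
      obtain ⟨c, hc⟩ := aux_scalar ρ hirr f hcomm
      rw [hc]
      exact Submodule.smul_mem _ _ (Submodule.mem_span_singleton_self _)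
    · rw [Submodule.span_singleton_le_iff_mem, Representation.mem_invariants]
      intro g
      rw [Representation.linHom_apply]
      ext v
      simp only [LinearMap.comp_apply, Module.End.one_apply]
      rw [← Module.End.mul_apply, ← map_mul, mul_inv_cancel, map_one, Module.End.one_apply]
  rw [hspan, finrank_span_singleton aux_one_ne_zero]

private lemma aux_trace_linHom {G V W : Type*} [Group G]
    [AddCommGroup V] [Module ℂ V] [FiniteDimensional ℂ V]
    [AddCommGroup W] [Module ℂ W] [FiniteDimensional ℂ W]
    (ρV : Representation ℂ G V) (ρW : Representation ℂ G W) (g : G) :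
    LinearMap.trace ℂ (V →ₗ[ℂ] W) (Representation.linHom ρV ρW g)
      = LinearMap.trace ℂ V (ρV g⁻¹) * LinearMap.trace ℂ W (ρW g) := by
  have hcomm := Representation.dualTensorHom_comm ρV ρW g
  have he : (Representation.linHom ρV ρW) g
      = (dualTensorHomEquiv ℂ V W).conj (TensorProduct.map (ρV.dual g) (ρW g)) := by
    rw [LinearEquiv.conj_apply]
    ext x : 1
    have h := congrArg (fun S => S ((dualTensorHomEquiv ℂ V W).symm x)) hcomm
    simp only [LinearMap.comp_apply, dualTensorHomEquiv,
      dualTensorHomEquivOfBasis_apply, dualTensorHomEquivOfBasis_symm_cancel_right] at h ⊢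
    have hx : dualTensorHom ℂ V W ((LinearEquiv.ofBijective (dualTensorHom ℂ V W) (dualTensorHomEquiv ℂ V W).bijective).symm x) = x :=
      (LinearEquiv.ofBijective (dualTensorHom ℂ V W) (dualTensorHomEquiv ℂ V W).bijective).apply_symm_apply x
    rw [hx] at h
    rw [← h]
    rfl
  rw [he, LinearMap.trace_conj', LinearMap.trace_tensorProduct',
    Representation.dual_apply, LinearMap.trace_transpose']



section
variable {G V : Type*} [Group G] [Fintype G] [AddCommGroup V] [Module ℂ V]
    [FiniteDimensional ℂ V] [Nontrivial V] (ρ : Representation ℂ G V)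

/-- `ρ g` and `ρ g⁻¹` are mutually inverse, and `ρ g` has finite order. -/
private lemma aux_conj_char (g : G) :
    LinearMap.trace ℂ V (ρ g⁻¹) = starRingEnd ℂ (LinearMap.trace ℂ V (ρ g)) := by
  refine aux_trace_inv (ρ g) (ρ g⁻¹) ?_ ?_ (n := Fintype.card G) Fintype.card_pos ?_
  · rw [← map_mul, mul_inv_cancel, map_one]
  · rw [← map_mul, inv_mul_cancel, map_one]
  · rw [← map_pow, pow_card_eq_one, map_one]

private lemma aux_center_scalar
    (hirr : ∀ U : Submodule ℂ V, (∀ g : G, ∀ v ∈ U, ρ g v ∈ U) → U = ⊥ ∨ U = ⊤)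
    {z : G} (hz : z ∈ Subgroup.center G) :
    ∃ c : ℂ, ρ z = c • (1 : Module.End ℂ V) ∧ ‖c‖ = 1 := by
  obtain ⟨c, hc⟩ := aux_scalar ρ hirr (ρ z) (by
    intro g
    rw [← map_mul, ← map_mul, (Subgroup.mem_center_iff.mp hz g).symm])
  refine ⟨c, hc, ?_⟩
  have hpow : (ρ z) ^ Fintype.card G = 1 := by
    rw [← map_pow, pow_card_eq_one, map_one]
  rw [hc, _root_.smul_pow, one_pow] at hpow
  obtain ⟨v, hv⟩ := exists_ne (0 : V)
  have h2 := congrArg (fun S : Module.End ℂ V => S v) hpow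
  simp only [LinearMap.smul_apply, Module.End.one_apply] at h2
  have h3 : (c ^ Fintype.card G - 1) • v = 0 := by
    rw [sub_smul, one_smul, h2, sub_self]
  rcases smul_eq_zero.mp h3 with h4 | h4
  · exact Complex.norm_eq_one_of_pow_eq_one (by linear_combination h4) Fintype.card_ne_zero
  · exact absurd h4 hv

private lemma aux_vanish
    (hirr : ∀ U : Submodule ℂ V, (∀ g : G, ∀ v ∈ U, ρ g v ∈ U) → U = ⊥ ∨ U = ⊤)
    (hSV : Nat.card (G ⧸ Subgroup.center G) = (finrank ℂ V) ^ 2) :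
    ∀ g : G, g ∉ Subgroup.center G → LinearMap.trace ℂ V (ρ g) = 0 := by
  classical
  set d := finrank ℂ V with hd
  set χ : G → ℂ := fun g => LinearMap.trace ℂ V (ρ g) with hχ
  -- total sum of |χ g|²
  have hsum : ∑ g : G, (Complex.normSq (χ g) : ℝ) = (Fintype.card G : ℝ) := by
    have h1 : ∑ g : G, LinearMap.trace ℂ (V →ₗ[ℂ] V) (Representation.linHom ρ ρ g)
        = (Fintype.card G : ℂ) := by
      rw [aux_avg (Representation.linHom ρ ρ), aux_dim_one ρ hirr]
      simp
    have h2 : ∀ g : G, LinearMap.trace ℂ (V →ₗ[ℂ] V) (Representation.linHom ρ ρ g)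
        = (Complex.normSq (χ g) : ℝ) := by
      intro g
      rw [aux_trace_linHom ρ ρ g, aux_conj_char ρ g, mul_comm, Complex.mul_conj]
    rw [Finset.sum_congr rfl (fun g _ => h2 g)] at h1
    exact_mod_cast h1
  -- center terms
  have hcen : ∀ z ∈ Subgroup.center G, Complex.normSq (χ z) = (d : ℝ) ^ 2 := by
    intro z hz
    obtain ⟨c, hc, hc1⟩ := aux_center_scalar ρ hirr hz
    have : χ z = c * d := by
      rw [hχ]; simp only [hc, map_smul, LinearMap.trace_one, smul_eq_mul, ← hd]
    have h7 : Complex.normSq c = 1 := by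
      rw [Complex.normSq_eq_norm_sq, hc1, one_pow]
    have h8 : Complex.normSq (d : ℂ) = (d : ℝ) ^ 2 := by
      rw [Complex.normSq_eq_norm_sq]
      simp
    rw [this, Complex.normSq_mul, h7, one_mul, h8]
  -- Lagrange + hSV
  have hcard : (Fintype.card G : ℝ)
      = (Fintype.card (Subgroup.center G) : ℝ) * (d : ℝ) ^ 2 := by
    have := Subgroup.card_eq_card_quotient_mul_card_subgroup (Subgroup.center G)
    rw [hSV] at this
    have h5 : Fintype.card G = d ^ 2 * Fintype.card (Subgroup.center G) := by
      simpa [Nat.card_eq_fintype_card] using this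
    rw [h5]
    push_cast
    ring
  -- split
  have hsplit := Finset.sum_filter_add_sum_filter_not Finset.univ
    (fun g => g ∈ Subgroup.center G) (fun g => (Complex.normSq (χ g) : ℝ))
  have hZ : ∑ g ∈ Finset.univ.filter (fun g => g ∈ Subgroup.center G),
      (Complex.normSq (χ g) : ℝ) = (Fintype.card (Subgroup.center G) : ℝ) * (d : ℝ) ^ 2 := by
    rw [Finset.sum_congr rfl (fun g hg => hcen g (by simpa using hg))]
    rw [Finset.sum_const, nsmul_eq_mul]
    congr 1
    norm_cast
    simpa using (Fintype.card_subtype (fun g => g ∈ Subgroup.center G)).symm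
  have hnot : ∑ g ∈ Finset.univ.filter (fun g => ¬ g ∈ Subgroup.center G),
      (Complex.normSq (χ g) : ℝ) = 0 := by
    have := hsplit
    rw [hZ, hsum, hcard] at this
    linarith
  intro g hg
  have hterm : Complex.normSq (χ g) = 0 := by
    have h6 := (Finset.sum_eq_zero_iff_of_nonneg (fun i _ => Complex.normSq_nonneg (χ i))).mp
      hnot g (by simp [hg])
    exact_mod_cast h6
  exact Complex.normSq_eq_zero.mp hterm

end



private lemma aux_center_map {G₁ G₂ : Type*} [Group G₁] [Group G₂] (α : G₁ ≃* G₂) {z : G₁}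
    (hz : z ∈ Subgroup.center G₁) : α z ∈ Subgroup.center G₂ := by
  rw [Subgroup.mem_center_iff]
  intro g₂
  have h := Subgroup.mem_center_iff.mp hz (α.symm g₂)
  calc g₂ * α z = α (α.symm g₂ * z) := by rw [map_mul, MulEquiv.apply_symm_apply]
    _ = α (z * α.symm g₂) := by rw [h]
    _ = α z * g₂ := by rw [map_mul, MulEquiv.apply_symm_apply]

private lemma aux_psi_inv {G V : Type*} [Group G] [AddCommGroup V] [Module ℂ V] [Nontrivial V]
    (ρ : Representation ℂ G V) (ψ : G → ℂ)
    (hψ : ∀ z ∈ Subgroup.center G, ρ z = ψ z • (LinearMap.id : V →ₗ[ℂ] V))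
    {z : G} (hz : z ∈ Subgroup.center G) : ψ z⁻¹ * ψ z = 1 := by
  have hzi : z⁻¹ ∈ Subgroup.center G := inv_mem hz
  have h1 : ρ z⁻¹ * ρ z = 1 := by rw [← map_mul, inv_mul_cancel, map_one]
  rw [hψ _ hzi, hψ _ hz] at h1
  obtain ⟨v, hv⟩ := exists_ne (0 : V)
  have h2 := congrArg (fun S : Module.End ℂ V => S v) h1
  simp only [Module.End.mul_apply, LinearMap.smul_apply, LinearMap.id_apply,
    Module.End.one_apply, map_smul, smul_smul] at h2
  have h3 : (ψ z⁻¹ * ψ z - 1) • v = 0 := by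
    rw [sub_smul, one_smul, mul_comm (ψ z⁻¹) (ψ z), h2, sub_self]
  rcases smul_eq_zero.mp h3 with h4 | h4
  · linear_combination h4
  · exact absurd h4 hv

/-- Isomorphism criterion for SV-representations: given SV-representations `ρ₁, ρ₂` of
finite groups `G₁, G₂` with central characters `ψ₁, ψ₂` and an isomorphism `α : G₁ ≃* G₂`,
an intertwiner `T` with `T ∘ ρ₁(g) = ρ₂(α g) ∘ T` exists iff `ψ₁ = ψ₂ ∘ α` on `Z(G₁)`. -/
theorem stmt_7 {G₁ G₂ V₁ V₂ : Type*} [Group G₁] [Fintype G₁] [Group G₂] [Fintype G₂]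
    [AddCommGroup V₁] [Module ℂ V₁] [FiniteDimensional ℂ V₁] [Nontrivial V₁]
    [AddCommGroup V₂] [Module ℂ V₂] [FiniteDimensional ℂ V₂] [Nontrivial V₂]
    (ρ₁ : Representation ℂ G₁ V₁) (ρ₂ : Representation ℂ G₂ V₂)
    (hirr₁ : ∀ U : Submodule ℂ V₁, (∀ g : G₁, ∀ v ∈ U, ρ₁ g v ∈ U) → U = ⊥ ∨ U = ⊤)
    (hSV₁ : Nat.card (G₁ ⧸ Subgroup.center G₁) = (Module.finrank ℂ V₁) ^ 2)
    (hirr₂ : ∀ U : Submodule ℂ V₂, (∀ g : G₂, ∀ v ∈ U, ρ₂ g v ∈ U) → U = ⊥ ∨ U = ⊤)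
    (hSV₂ : Nat.card (G₂ ⧸ Subgroup.center G₂) = (Module.finrank ℂ V₂) ^ 2)
    (ψ₁ : G₁ → ℂ)
    (hψ₁ : ∀ z ∈ Subgroup.center G₁, ρ₁ z = ψ₁ z • (LinearMap.id : V₁ →ₗ[ℂ] V₁))
    (ψ₂ : G₂ → ℂ)
    (hψ₂ : ∀ z ∈ Subgroup.center G₂, ρ₂ z = ψ₂ z • (LinearMap.id : V₂ →ₗ[ℂ] V₂))
    (α : G₁ ≃* G₂) :
    (∃ T : V₁ ≃ₗ[ℂ] V₂, ∀ (g : G₁) (v : V₁), T (ρ₁ g v) = ρ₂ (α g) (T v)) ↔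
      ∀ z ∈ Subgroup.center G₁, ψ₁ z = ψ₂ (α z) := by
  classical
  constructor
  · rintro ⟨T, hT⟩ z hz
    have hz2 : α z ∈ Subgroup.center G₂ := aux_center_map α hz
    obtain ⟨v, hv⟩ := exists_ne (0 : V₁)
    have h1 : ψ₁ z • (T v) = ψ₂ (α z) • (T v) := by
      have h := hT z v
      rw [hψ₁ z hz, hψ₂ _ hz2] at h
      simpa using h
    have hTv : T v ≠ 0 := fun h => hv (by simpa using congrArg T.symm h)
    have h2 : (ψ₁ z - ψ₂ (α z)) • T v = 0 := by rw [sub_smul, h1, sub_self]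
    rcases smul_eq_zero.mp h2 with h | h
    · linear_combination h
    · exact absurd h hTv
  · intro hψ
    set σ : Representation ℂ G₂ V₁ := ρ₁.comp α.symm.toMonoidHom with hσdef
    have hσ : ∀ g : G₂, σ g = ρ₁ (α.symm g) := fun g => rfl
    have hσα : ∀ g : G₁, σ (α g) = ρ₁ g := fun g => by rw [hσ, MulEquiv.symm_apply_apply]
    -- equal dimensions
    have hd12 : finrank ℂ V₁ = finrank ℂ V₂ := by
      have hmap : Subgroup.map α.toMonoidHom (Subgroup.center G₁) = Subgroup.center G₂ := by
        ext g₂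
        simp only [Subgroup.mem_map]
        constructor
        · rintro ⟨z, hz, rfl⟩
          exact aux_center_map α hz
        · intro hg₂
          exact ⟨α.symm g₂, aux_center_map α.symm hg₂, α.apply_symm_apply g₂⟩
      have hq : Nat.card (G₁ ⧸ Subgroup.center G₁) = Nat.card (G₂ ⧸ Subgroup.center G₂) :=
        Nat.card_congr (QuotientGroup.congr _ _ α hmap).toEquiv
      have := hSV₁.symm.trans (hq.trans hSV₂)
      exact Nat.pow_left_injective (by norm_num) this
    set d := finrank ℂ V₂ with hdd
    -- irreducibility of σ
    have hirrσ : ∀ U : Submodule ℂ V₁, (∀ g : G₂, ∀ v ∈ U, σ g v ∈ U) → U = ⊥ ∨ U = ⊤ := by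
      intro U hU
      apply hirr₁ U
      intro g v hv
      have h := hU (α g) v hv
      rwa [hσα] at h
    -- character vanishing for ρ₂
    have hvan := aux_vanish ρ₂ hirr₂ hSV₂
    -- termwise trace of linHom
    have hterm : ∀ g : G₂, LinearMap.trace ℂ (V₁ →ₗ[ℂ] V₂) (Representation.linHom σ ρ₂ g)
        = if g ∈ Subgroup.center G₂ then ((d : ℂ)) ^ 2 else 0 := by
      intro g
      rw [aux_trace_linHom]
      by_cases hg : g ∈ Subgroup.center G₂
      · simp only [hg, if_true]
        have hw : α.symm g ∈ Subgroup.center G₁ := aux_center_map α.symm hg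
        have hwi : (α.symm g)⁻¹ ∈ Subgroup.center G₁ := inv_mem hw
        have e2 : LinearMap.trace ℂ V₁ (σ g⁻¹) = ψ₁ ((α.symm g)⁻¹) * (d : ℂ) := by
          rw [hσ, map_inv, hψ₁ _ hwi, map_smul, LinearMap.trace_id, smul_eq_mul, hd12]
        have e3 : LinearMap.trace ℂ V₂ (ρ₂ g) = ψ₂ g * (d : ℂ) := by
          rw [hψ₂ _ hg, map_smul, LinearMap.trace_id, smul_eq_mul]
        have e4 : ψ₁ ((α.symm g)⁻¹) = ψ₂ g⁻¹ := by
          rw [hψ _ hwi, map_inv, MulEquiv.apply_symm_apply]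
        have e6 : ψ₂ g⁻¹ * ψ₂ g = 1 := aux_psi_inv ρ₂ ψ₂ hψ₂ hg
        rw [e2, e3, e4]
        ring_nf
        rw [mul_comm (ψ₂ g⁻¹) (ψ₂ g)] at *
        linear_combination (d : ℂ) ^ 2 * e6
      · simp only [hg, if_false]
        rw [hvan g hg, mul_zero]
    -- total sum
    have hZcard : Fintype.card G₂ = d ^ 2 * Fintype.card (Subgroup.center G₂) := by
      have h := Subgroup.card_eq_card_quotient_mul_card_subgroup (Subgroup.center G₂)
      rw [hSV₂] at h
      simpa [Nat.card_eq_fintype_card] using h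
    have hsum : ∑ g : G₂, LinearMap.trace ℂ (V₁ →ₗ[ℂ] V₂) (Representation.linHom σ ρ₂ g)
        = (Fintype.card G₂ : ℂ) := by
      rw [Finset.sum_congr rfl (fun g _ => hterm g), Finset.sum_ite, Finset.sum_const,
        Finset.sum_const_zero, add_zero, nsmul_eq_mul]
      have hcf : (Finset.univ.filter (fun g : G₂ => g ∈ Subgroup.center G₂)).card
          = Fintype.card (Subgroup.center G₂) := by
        simpa using (Fintype.card_subtype (fun g : G₂ => g ∈ Subgroup.center G₂)).symm
      rw [hcf, hZcard]
      push_cast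
      ring
    -- finrank of invariants is 1
    have havg := aux_avg (Representation.linHom σ ρ₂)
    rw [hsum] at havg
    have hcard0 : (Fintype.card G₂ : ℂ) ≠ 0 := Nat.cast_ne_zero.mpr Fintype.card_ne_zero
    have hfr : (finrank ℂ (Representation.linHom σ ρ₂).invariants : ℂ) = 1 :=
      mul_left_cancel₀ hcard0 (by rw [← havg, mul_one])
    have hfr' : finrank ℂ (Representation.linHom σ ρ₂).invariants = 1 := by exact_mod_cast hfr
    have hne : (Representation.linHom σ ρ₂).invariants ≠ ⊥ := by
      intro h
      rw [h, finrank_bot] at hfr'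
      omega
    obtain ⟨f, hfmem, hf0⟩ := Submodule.exists_mem_ne_zero_of_ne_bot hne
    -- f is an intertwiner
    have hint : ∀ (g : G₂) (v : V₁), f (σ g v) = ρ₂ g (f v) := by
      intro g v
      have h := (Representation.mem_invariants _ f).mp hfmem g
      rw [Representation.linHom_apply] at h
      have h2 := congrArg (fun S : V₁ →ₗ[ℂ] V₂ => S (σ g v)) h
      simp only [LinearMap.comp_apply] at h2
      have h3 : σ g⁻¹ (σ g v) = v := by
        rw [← Module.End.mul_apply, ← map_mul, inv_mul_cancel, map_one, Module.End.one_apply]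
      rw [h3] at h2
      exact h2.symm
    -- Schur: f is bijective
    have hker : LinearMap.ker f = ⊥ := by
      rcases hirrσ (LinearMap.ker f) (fun g v hv => by
        rw [LinearMap.mem_ker] at hv ⊢
        rw [hint g v, hv, map_zero]) with h | h
      · exact h
      · exfalso
        apply hf0
        ext v
        have hv : v ∈ LinearMap.ker f := h ▸ Submodule.mem_top
        simpa using hv
    have hrange : LinearMap.range f = ⊤ := by
      rcases hirr₂ (LinearMap.range f) (fun g w hw => by
        obtain ⟨v, rfl⟩ := hw
        exact ⟨σ g v, (hint g v)⟩) with h | h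
      · exfalso
        apply hf0
        ext v
        have hv : f v ∈ LinearMap.range f := LinearMap.mem_range_self f v
        rw [h] at hv
        simpa using hv
      · exact h
    refine ⟨LinearEquiv.ofBijective f ⟨LinearMap.ker_eq_bot.mp hker,
      LinearMap.range_eq_top.mp hrange⟩, ?_⟩
    intro g v
    show f (ρ₁ g v) = ρ₂ (α g) (f v)
    rw [← hσα g]
    exact hint (α g) v
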